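/- Let z : ℤ, let p : ℤ be prime, and let a b : ℤ with a^2 + z*a*b + b^2 = p. Then in R_z := AdjoinRoot (X^2 - C z * X + 1 : ℤ[X]), the elements a + b•ω and (a + z*b) - b•ω are associated (Associated (a + b•ω) ((a + z*b) - b•ω)) if and only if p ∣ 2 - z or p ∣ 2 + z. -/
import Mathlib

open Polynomial

noncomputable abbrev Rz (z : ℤ) : Type :=
  AdjoinRoot (X ^ 2 - C z * X + 1 : ℤ[X])

noncomputable abbrev omegaZ (z : ℤ) : Rz z :=
  AdjoinRoot.root (X ^ 2 - C z * X + 1 : ℤ[X])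

lemma omega_sq (z : ℤ) : (omegaZ z) ^ 2 = (z : Rz z) * omegaZ z - 1 := by
  have h0 : AdjoinRoot.mk (X ^ 2 - C z * X + 1 : ℤ[X]) (X ^ 2 - C z * X + 1 : ℤ[X]) = 0 :=
    AdjoinRoot.mk_self
  have h1 : (C z : ℤ[X]) = ((z : ℤ[X])) := Polynomial.C_eq_intCast z
  rw [h1] at h0
  simp only [map_add, map_sub, map_mul, map_pow, map_one, map_intCast, AdjoinRoot.mk_X] at h0
  rw [← h1] at h0
  linear_combination h0

lemma back_lemma (z p a b k ε : ℤ) (hab : a ^ 2 + z * a * b + b ^ 2 = p) (hε : ε * ε = 1)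
    (hk : a + ε * b = p * k) :
    Associated ((a : Rz z) + b • omegaZ z) (((a + z * b : ℤ) : Rz z) - b • omegaZ z) := by
  have hW : (omegaZ z) ^ 2 = (z : Rz z) * omegaZ z - 1 := omega_sq z
  set W := omegaZ z with hWdef
  have hsm : (b • W) = (b : Rz z) * W := zsmul_eq_mul W b
  have hcast : ((a + z * b : ℤ) : Rz z) = (a : Rz z) + (z : Rz z) * (b : Rz z) := by
    push_cast; ring
  rw [hsm, hcast]
  have habR : (a : Rz z) ^ 2 + (z : Rz z) * a * b + (b : Rz z) ^ 2 = (p : Rz z) := by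
    exact_mod_cast congrArg (fun t : ℤ => (t : Rz z)) hab
  have hkR : (a : Rz z) + (ε : Rz z) * (b : Rz z) = (p : Rz z) * (k : Rz z) := by
    exact_mod_cast congrArg (fun t : ℤ => (t : Rz z)) hk
  have hεR : (ε : Rz z) * (ε : Rz z) = 1 := by
    exact_mod_cast congrArg (fun t : ℤ => (t : Rz z)) hε
  have hN : ((a : Rz z) + (b : Rz z) * W) * ((a : Rz z) + (z : Rz z) * (b : Rz z) - (b : Rz z) * W)
      = (p : Rz z) := by
    linear_combination (-(b : Rz z) ^ 2) * hW + habR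
  have hWu : W * ((z : Rz z) - W) = 1 := by linear_combination -hW
  have key1 : ((a : Rz z) + (b : Rz z) * W) *
        (1 - (k : Rz z) * ((a : Rz z) + (z : Rz z) * (b : Rz z) - (b : Rz z) * W) * (1 + (ε : Rz z) * W))
      = ((a : Rz z) + (z : Rz z) * (b : Rz z) - (b : Rz z) * W) * (-((ε : Rz z) * W)) := by
    linear_combination (-(k : Rz z) * (1 + (ε : Rz z) * W)) * hN + (-(ε : Rz z) * (b : Rz z)) * hW
      + (1 + (ε : Rz z) * W) * hkR + (-(b : Rz z) * W) * hεR
  have key2 : (1 - (k : Rz z) * ((a : Rz z) + (z : Rz z) * (b : Rz z) - (b : Rz z) * W) * (1 + (ε : Rz z) * W)) *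
        (1 - (k : Rz z) * ((a : Rz z) + (b : Rz z) * W) * (1 + (ε : Rz z) * ((z : Rz z) - W)))
      = 1 := by
    linear_combination ((k : Rz z) ^ 2 * (1 + (ε : Rz z) * W) * (1 + (ε : Rz z) * ((z : Rz z) - W))) * hN
      + (2 * (ε : Rz z) * (k : Rz z) * (b : Rz z) - (k : Rz z) ^ 2 * (p : Rz z)) * hW
      + (-(k : Rz z) * (2 + (ε : Rz z) * (z : Rz z))) * hkR
      + ((k : Rz z) * (z : Rz z) * (b : Rz z)
          + (k : Rz z) ^ 2 * (p : Rz z) * ((z : Rz z) * W - W ^ 2)) * hεR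
  set v : Rz z := 1 - (k : Rz z) * ((a : Rz z) + (z : Rz z) * (b : Rz z) - (b : Rz z) * W) * (1 + (ε : Rz z) * W) with hv
  set vb : Rz z := 1 - (k : Rz z) * ((a : Rz z) + (b : Rz z) * W) * (1 + (ε : Rz z) * ((z : Rz z) - W)) with hvb
  have hts : (-(ε : Rz z) * v * ((z : Rz z) - W)) * (-(ε : Rz z) * vb * W) = 1 := by
    linear_combination ((ε : Rz z) * (ε : Rz z) * ((z : Rz z) - W) * W) * key2
      + ((ε : Rz z) * (ε : Rz z)) * hWu + hεR
  refine ⟨Units.mkOfMulEqOne _ _ hts, ?_⟩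
  rw [Units.val_mkOfMulEqOne]
  linear_combination (-(ε : Rz z) * ((z : Rz z) - W)) * key1
    + ((ε : Rz z) * (ε : Rz z) * ((a : Rz z) + (z : Rz z) * (b : Rz z) - (b : Rz z) * W)) * hWu
    + ((a : Rz z) + (z : Rz z) * (b : Rz z) - (b : Rz z) * W) * hεR

theorem stmt13 (z p : ℤ) (hp : Prime p) (a b : ℤ)
    (hab : a ^ 2 + z * a * b + b ^ 2 = p) :
    Associated ((a : Rz z) + b • omegaZ z) (((a + z * b : ℤ) : Rz z) - b • omegaZ z) ↔
      (p ∣ 2 - z ∨ p ∣ 2 + z) := by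
  have hnotboth : ¬(p ∣ a ∧ p ∣ b) := by
    rintro ⟨⟨a', ha'⟩, ⟨b', hb'⟩⟩
    subst ha'; subst hb'
    have hpp : p * p ∣ p := ⟨a' ^ 2 + z * a' * b' + b' ^ 2, by linear_combination -hab⟩
    have h1 : p ∣ 1 := (mul_dvd_mul_iff_left hp.ne_zero).mp (by rw [mul_one]; exact hpp)
    exact hp.not_unit (isUnit_of_dvd_one h1)
  constructor
  · rintro ⟨u, hu⟩
    -- setup
    have hW : (omegaZ z) ^ 2 = (z : Rz z) * omegaZ z - 1 := omega_sq z
    have hC : (C z : ℤ[X]) = ((z : ℤ[X])) := Polynomial.C_eq_intCast z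
    set W := omegaZ z with hWdef
    have hsm : (b • W) = (b : Rz z) * W := zsmul_eq_mul W b
    have hcast : ((a + z * b : ℤ) : Rz z) = (a : Rz z) + (z : Rz z) * (b : Rz z) := by
      push_cast; ring
    rw [hsm, hcast] at hu
    have habR : (a : Rz z) ^ 2 + (z : Rz z) * a * b + (b : Rz z) ^ 2 = (p : Rz z) := by
      exact_mod_cast congrArg (fun t : ℤ => (t : Rz z)) hab
    have hN : ((a : Rz z) + (b : Rz z) * W) * ((a : Rz z) + (z : Rz z) * (b : Rz z) - (b : Rz z) * W)
        = (p : Rz z) := by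
      linear_combination (-(b : Rz z) ^ 2) * hW + habR
    have h2 : ((a : Rz z) + (b : Rz z) * W) * ((a : Rz z) + (b : Rz z) * W) * (u : Rz z)
        = (p : Rz z) := by
      rw [mul_assoc, hu, hN]
    have h3 : ((a : Rz z) + (b : Rz z) * W) * ((a : Rz z) + (b : Rz z) * W)
        = (p : Rz z) * ((u⁻¹ : (Rz z)ˣ) : Rz z) := by
      calc ((a : Rz z) + (b : Rz z) * W) * ((a : Rz z) + (b : Rz z) * W)
          = ((a : Rz z) + (b : Rz z) * W) * ((a : Rz z) + (b : Rz z) * W) * (u : Rz z)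
              * ((u⁻¹ : (Rz z)ˣ) : Rz z) := by
            rw [mul_assoc, ← Units.val_mul, mul_inv_cancel, Units.val_one, mul_one]
        _ = (p : Rz z) * ((u⁻¹ : (Rz z)ˣ) : Rz z) := by rw [h2]
    obtain ⟨U, hU⟩ := AdjoinRoot.mk_surjective ((u⁻¹ : (Rz z)ˣ) : Rz z)
    set L : ℤ[X] := Polynomial.C (a ^ 2 - b ^ 2) + Polynomial.C (b * (2 * a + z * b)) * X with hL
    have hgA : AdjoinRoot.mk (X ^ 2 - C z * X + 1 : ℤ[X]) ((a : ℤ[X]) + (b : ℤ[X]) * X)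
        = (a : Rz z) + (b : Rz z) * W := by
      rw [map_add, map_mul, map_intCast, map_intCast, AdjoinRoot.mk_X]
    have hmkL : AdjoinRoot.mk (X ^ 2 - C z * X + 1 : ℤ[X]) L
        = ((a : Rz z) + (b : Rz z) * W) * ((a : Rz z) + (b : Rz z) * W) := by
      have e : L = ((a : ℤ[X]) + (b : ℤ[X]) * X) * ((a : ℤ[X]) + (b : ℤ[X]) * X)
          - (b : ℤ[X]) ^ 2 * (X ^ 2 - C z * X + 1) := by
        have hCa : (C (a ^ 2 - b ^ 2) : ℤ[X]) = ((a ^ 2 - b ^ 2 : ℤ) : ℤ[X]) :=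
          Polynomial.C_eq_intCast _
        have hCb : (C (b * (2 * a + z * b)) : ℤ[X]) = ((b * (2 * a + z * b) : ℤ) : ℤ[X]) :=
          Polynomial.C_eq_intCast _
        rw [hL, hCa, hCb, hC]
        push_cast
        ring
      rw [e, map_sub, map_mul, map_mul, map_pow, hgA, AdjoinRoot.mk_self, mul_zero, sub_zero]
    have hdvd : (X ^ 2 - C z * X + 1 : ℤ[X]) ∣ L - (p : ℤ[X]) * U := by
      rw [← AdjoinRoot.mk_eq_zero, map_sub, map_mul, map_intCast, hU, hmkL, h3, sub_self]
    -- reduce mod p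
    set q : ℕ := p.natAbs with hq
    haveI : Fact (Nat.Prime q) := ⟨Int.prime_iff_natAbs_prime.mp hp⟩
    set φ : ℤ →+* ZMod q := Int.castRingHom (ZMod q) with hφ
    have hpq : ((p : ℤ) : ZMod q) = 0 := by
      rw [ZMod.intCast_zmod_eq_zero_iff_dvd]
      exact Int.natAbs_dvd.mpr dvd_rfl
    have hMonic : (X ^ 2 - C z * X + 1 : ℤ[X]).Monic := by
      rw [hC]; monicity!
    have hmdvd : (X ^ 2 - C z * X + 1 : ℤ[X]).map φ ∣ (L - (p : ℤ[X]) * U).map φ :=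
      Polynomial.map_dvd φ hdvd
    have hmapg : ((X ^ 2 - C z * X + 1 : ℤ[X]).map φ).degree = 2 := by
      rw [hMonic.degree_map, hC]
      compute_degree!
    have hpq' : ((p : ℤ) : ℤ[X]).map φ = 0 := by
      rw [Polynomial.map_intCast,
        show ((p : ℤ) : (ZMod q)[X]) = Polynomial.C ((p : ZMod q)) from
          (Polynomial.C_eq_intCast _).symm, hpq, map_zero]
    have hmapL : (L - (p : ℤ[X]) * U).map φ
        = Polynomial.C ((a ^ 2 - b ^ 2 : ℤ) : ZMod q)
            + Polynomial.C ((b * (2 * a + z * b) : ℤ) : ZMod q) * X := by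
      rw [Polynomial.map_sub, Polynomial.map_mul, hpq', zero_mul, sub_zero, hL,
        Polynomial.map_add, Polynomial.map_mul, Polynomial.map_C, Polynomial.map_C,
        Polynomial.map_X]
      rfl
    have hzero : (L - (p : ℤ[X]) * U).map φ = 0 := by
      refine Polynomial.eq_zero_of_dvd_of_degree_lt hmdvd ?_
      rw [hmapg, hmapL]
      have hdeg : (Polynomial.C ((a ^ 2 - b ^ 2 : ℤ) : ZMod q)
          + Polynomial.C ((b * (2 * a + z * b) : ℤ) : ZMod q) * X : (ZMod q)[X]).degree ≤ 1 := by
        compute_degree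
      exact lt_of_le_of_lt hdeg (by norm_num)
    have hc0 : ((a ^ 2 - b ^ 2 : ℤ) : ZMod q) = 0 := by
      have h := hzero
      rw [hmapL] at h
      have h0 := congrArg (Polynomial.eval 0) h
      simpa using h0
    have hpd : p ∣ a ^ 2 - b ^ 2 :=
      Int.natAbs_dvd.mp ((ZMod.intCast_zmod_eq_zero_iff_dvd _ q).mp hc0)
    -- integer endgame
    have hfac : p ∣ (a - b) * (a + b) := by
      rw [show (a - b) * (a + b) = a ^ 2 - b ^ 2 by ring]
      exact hpd
    rcases hp.dvd_or_dvd hfac with h1 | h1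
    · -- p ∣ a - b  ⇒  p ∣ 2 + z
      have h2 : p ∣ (2 + z) * (a * b) := by
        have e : (2 + z) * (a * b) = p - (a - b) * (a - b) := by linear_combination hab
        rw [e]; exact dvd_sub dvd_rfl (h1.mul_right _)
      rcases hp.dvd_or_dvd h2 with h3 | h3
      · exact Or.inr h3
      · rcases hp.dvd_or_dvd h3 with h4 | h4
        · exact absurd ⟨h4, by simpa using dvd_sub h4 h1⟩ hnotboth
        · exact absurd ⟨by simpa using dvd_add h1 h4, h4⟩ hnotboth
    · -- p ∣ a + b  ⇒  p ∣ 2 - z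
      have h2 : p ∣ (2 - z) * (a * b) := by
        have e : (2 - z) * (a * b) = (a + b) * (a + b) - p := by linear_combination -hab
        rw [e]; exact dvd_sub (h1.mul_right _) dvd_rfl
      rcases hp.dvd_or_dvd h2 with h3 | h3
      · exact Or.inl h3
      · rcases hp.dvd_or_dvd h3 with h4 | h4
        · exact absurd ⟨h4, by simpa using dvd_sub h1 h4⟩ hnotboth
        · exact absurd ⟨by simpa using dvd_sub h1 h4, h4⟩ hnotboth
  · rintro (h | h)
    · -- p ∣ 2 - z : then p ∣ a + b
      have hsq : p ∣ (a + b) * (a + b) := by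
        have e : (a + b) * (a + b) = p + (2 - z) * (a * b) := by linear_combination hab
        rw [e]; exact dvd_add dvd_rfl (h.mul_right _)
      obtain ⟨k, hk⟩ := (hp.dvd_or_dvd hsq).elim id id
      exact back_lemma z p a b k 1 hab (by norm_num) (by linarith)
    · -- p ∣ 2 + z : then p ∣ a - b
      have hsq : p ∣ (a - b) * (a - b) := by
        have e : (a - b) * (a - b) = p - (2 + z) * (a * b) := by linear_combination hab
        rw [e]; exact dvd_sub dvd_rfl (h.mul_right _)
      obtain ⟨k, hk⟩ := (hp.dvd_or_dvd hsq).elim id id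
      exact back_lemma z p a b k (-1) hab (by norm_num) (by linarith)
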